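/- Under the deterministic UCB1 setup, suppose that for every arm i the partial averages m ↦ (1/m) ∑_{u=1}^m x i u converge to a limit μ i as m → ∞, and that there is a unique arm i* with μ i* = max_i μ i. If the selection sequence obeys the UCB1 rule with constant C > 0, then for every arm i ≠ i* the fraction of pulls of arm i tends to zero: T i n / n → 0 as n → ∞. -/

import Mathlib

open Finset Filter

/-- Number of pulls of arm `i` among rounds `1, …, t`. -/
noncomputable def pullCount {K : ℕ} (I : ℕ → Fin K) (i : Fin K) (t : ℕ) : ℕ :=
  ((Finset.Icc 1 t).filter (fun s => I s = i)).card

/-- Empirical mean of arm `i` after round `t` (equal to `0` when the arm was never pulled). -/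
noncomputable def empMean {K : ℕ} (x : Fin K → ℕ → ℝ) (I : ℕ → Fin K) (i : Fin K) (t : ℕ) : ℝ :=
  if pullCount I i t = 0 then 0
  else (1 / (pullCount I i t : ℝ)) * ∑ u ∈ Finset.Icc 1 (pullCount I i t), x i u

/-- The selection sequence `I` obeys the UCB1 rule with constant `C`. -/
def UCB1Rule {K : ℕ} (x : Fin K → ℕ → ℝ) (I : ℕ → Fin K) (C : ℝ) : Prop :=
  ∀ t : ℕ, 1 ≤ t →
    if ∃ i : Fin K, pullCount I i (t - 1) = 0 then pullCount I (I t) (t - 1) = 0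
    else ∀ j : Fin K,
      empMean x I j (t - 1) + Real.sqrt (C * Real.log t / (pullCount I j (t - 1) : ℝ))
        ≤ empMean x I (I t) (t - 1)
            + Real.sqrt (C * Real.log t / (pullCount I (I t) (t - 1) : ℝ))

lemma pullCount_succ {K : ℕ} (I : ℕ → Fin K) (i : Fin K) (t : ℕ) :
    pullCount I i (t+1) = pullCount I i t + if I (t+1) = i then 1 else 0 := by
  unfold pullCount
  rw [← Finset.insert_Icc_right_eq_Icc_add_one (Nat.le_add_left 1 t), Finset.filter_insert]
  split
  · rw [Finset.card_insert_of_notMem (by simp), Nat.add_comm]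
  · rw [Nat.add_zero]

lemma pullCount_mono {K : ℕ} (I : ℕ → Fin K) (i : Fin K) : Monotone (pullCount I i) := by
  intro a b hab
  exact Finset.card_le_card (Finset.filter_subset_filter _ (Finset.Icc_subset_Icc_right hab))

lemma pullCount_le {K : ℕ} (I : ℕ → Fin K) (i : Fin K) (t : ℕ) : pullCount I i t ≤ t := by
  calc pullCount I i t ≤ (Finset.Icc 1 t).card := Finset.card_filter_le _ _
  _ = t := by rw [Nat.card_Icc]; omega

lemma zeroArms_card {K : ℕ} (x : Fin K → ℕ → ℝ) (I : ℕ → Fin K) (C : ℝ)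
    (hUCB : UCB1Rule x I C) (t : ℕ) :
    (Finset.univ.filter (fun i : Fin K => pullCount I i t = 0)).card ≤ K - t := by
  induction t with
  | zero => simpa using Finset.card_filter_le Finset.univ (fun i : Fin K => pullCount I i 0 = 0)
  | succ n ih =>
    by_cases hz : ∃ i : Fin K, pullCount I i n = 0
    · have h := hUCB (n+1) (Nat.le_add_left 1 n)
      rw [if_pos (by simpa using hz)] at h
      simp only [Nat.add_sub_cancel] at h
      have hsub : (Finset.univ.filter (fun i : Fin K => pullCount I i (n+1) = 0)) ⊆
          (Finset.univ.filter (fun i : Fin K => pullCount I i n = 0)).erase (I (n+1)) := by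
        intro j hj
        simp only [Finset.mem_filter, Finset.mem_univ, true_and] at hj
        rw [pullCount_succ] at hj
        rw [Finset.mem_erase]
        constructor
        · rintro rfl
          rw [if_pos rfl] at hj; omega
        · simp only [Finset.mem_filter, Finset.mem_univ, true_and]; omega
      have hmem : I (n+1) ∈ Finset.univ.filter (fun i : Fin K => pullCount I i n = 0) := by
        simp [h]
      calc _ ≤ _ := Finset.card_le_card hsub
        _ = _ - 1 := Finset.card_erase_of_mem hmem
        _ ≤ K - (n+1) := by omega
    · push_neg at hz
      have : (Finset.univ.filter (fun i : Fin K => pullCount I i (n+1) = 0)) = ∅ := by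
        rw [Finset.filter_eq_empty_iff]
        intro j _ hj0
        have := pullCount_mono I j (Nat.le_add_right n 1)
        have := hz j
        omega
      simp [this]

lemma pullCount_pos {K : ℕ} (x : Fin K → ℕ → ℝ) (I : ℕ → Fin K) (C : ℝ)
    (hUCB : UCB1Rule x I C) {t : ℕ} (ht : K ≤ t) (i : Fin K) :
    1 ≤ pullCount I i t := by
  have h := zeroArms_card x I C hUCB K
  have h0 : pullCount I i K ≠ 0 := by
    intro h0
    have : i ∈ Finset.univ.filter (fun j : Fin K => pullCount I j K = 0) := by simp [h0]
    have := Finset.card_pos.mpr ⟨i, this⟩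
    omega
  have := pullCount_mono I i ht
  omega

/-- Pure-real arithmetic core of the UCB per-pull bound. -/
lemma ucb_key_bound (C L Δ ε B D Mi Ti Ts μi μs ei es : ℝ)
    (hC : 0 < C) (hL : 1 ≤ L) (hΔ : 0 < Δ) (hε : ε = Δ/4) (hM : 1 ≤ Mi)
    (hTi : 1 ≤ Ti) (hTs : 1 ≤ Ts)
    (hidx : es + Real.sqrt (C*L/Ts) ≤ ei + Real.sqrt (C*L/Ti))
    (hub : Mi ≤ Ti → ei ≤ μi + ε)
    (hclose : Mi ≤ Ts → μs - ε ≤ es)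
    (hBs : B ≤ es)
    (hD : μi + ε - B ≤ D) (hD1 : 1 ≤ D)
    (hLD : (2*D)^2 ≤ C*L/Mi)
    (hΔdef : Δ = μs - μi) :
    Ti ≤ max (4*Mi) (4*C*L/Δ^2) := by
  have hTi0 : (0:ℝ) < Ti := by linarith
  have hTs0 : (0:ℝ) < Ts := by linarith
  have hMi0 : (0:ℝ) < Mi := by linarith
  have hCL : (0:ℝ) < C * L := by positivity
  by_cases hTiM : Mi ≤ Ti
  · have hei := hub hTiM
    by_cases hTsM : Mi ≤ Ts
    · have hes := hclose hTsM
      have h5 : Δ/2 ≤ Real.sqrt (C*L/Ti) := by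
        have h0 : 0 ≤ Real.sqrt (C*L/Ts) := Real.sqrt_nonneg _
        linarith
      have h6 : (Δ/2)^2 ≤ C*L/Ti :=
        (Real.le_sqrt (by positivity) (by positivity)).mp h5
      have h7 : (Δ/2)^2 * Ti ≤ C*L := by
        rw [← le_div_iff₀ hTi0]; exact h6
      refine le_max_of_le_right ?_
      rw [le_div_iff₀ (by positivity : (0:ℝ) < Δ^2)]
      nlinarith [h7]
    · have h2D : 2*D ≤ Real.sqrt (C*L/Mi) :=
        (Real.le_sqrt (by positivity) (le_trans (by positivity) hLD)).mpr hLD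
      have hmono : Real.sqrt (C*L/Mi) ≤ Real.sqrt (C*L/Ts) :=
        Real.sqrt_le_sqrt
          (div_le_div_of_nonneg_left (le_of_lt hCL) hTs0 (le_of_lt (not_le.mp hTsM)))
      have h5 : (1/2) * Real.sqrt (C*L/Mi) ≤ Real.sqrt (C*L/Ti) := by linarith
      have h6 : ((1/2) * Real.sqrt (C*L/Mi))^2 ≤ C*L/Ti :=
        (Real.le_sqrt (by positivity) (by positivity)).mp h5
      rw [mul_pow, Real.sq_sqrt (by positivity)] at h6
      have h6' : (C*L)/(4*Mi) ≤ (C*L)/Ti := by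
        calc (C*L)/(4*Mi) = (1/2)^2 * (C*L/Mi) := by ring
          _ ≤ _ := h6
      rw [div_le_div_iff₀ (by positivity) hTi0] at h6'
      exact le_max_of_le_left (by nlinarith [h6'])
  · exact le_max_of_le_left (by nlinarith [not_le.mp hTiM])

theorem ucb1_suboptimal_pull_fraction_tendsto_zero
    {K : ℕ} (hK : 2 ≤ K) (x : Fin K → ℕ → ℝ) (I : ℕ → Fin K)
    (μ : Fin K → ℝ)
    (hconv : ∀ i : Fin K,
      Tendsto (fun m : ℕ => (1 / (m : ℝ)) * ∑ u ∈ Finset.Icc 1 m, x i u) atTop (nhds (μ i)))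
    (istar : Fin K)
    (huniq : ∀ i : Fin K, i ≠ istar → μ i < μ istar)
    (C : ℝ) (hC : 0 < C)
    (hUCB : UCB1Rule x I C) :
    ∀ i : Fin K, i ≠ istar →
      Tendsto (fun n : ℕ => (pullCount I i n : ℝ) / (n : ℝ)) atTop (nhds 0) := by
  intro i hi
  have hΔpos : 0 < μ istar - μ i := sub_pos.mpr (huniq i hi)
  set Δ : ℝ := μ istar - μ i with hΔdef
  set ε : ℝ := Δ / 4 with hεdef
  have hεpos : 0 < ε := by positivity
  obtain ⟨M1, hM1⟩ := (Metric.tendsto_atTop.mp (hconv i)) ε hεpos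
  obtain ⟨M2, hM2⟩ := (Metric.tendsto_atTop.mp (hconv istar)) ε hεpos
  set M : ℕ := max 1 (max M1 M2) with hMdef
  have hMpos : 1 ≤ M := le_max_left _ _
  have hMR : (0:ℝ) < (M:ℝ) := by exact_mod_cast hMpos
  have hM1' : ∀ m : ℕ, M ≤ m →
      |(1 / (m : ℝ)) * ∑ u ∈ Finset.Icc 1 m, x i u - μ i| < ε := by
    intro m hm
    rw [← Real.dist_eq]
    exact hM1 m (le_trans (le_trans (le_max_left M1 M2) (le_max_right _ _)) hm)
  have hM2' : ∀ m : ℕ, M ≤ m →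
      |(1 / (m : ℝ)) * ∑ u ∈ Finset.Icc 1 m, x istar u - μ istar| < ε := by
    intro m hm
    rw [← Real.dist_eq]
    exact hM2 m (le_trans (le_trans (le_max_right M1 M2) (le_max_right _ _)) hm)
  obtain ⟨B, hB⟩ := (hconv istar).bddBelow_range
  have hB' : ∀ m : ℕ, B ≤ (1 / (m : ℝ)) * ∑ u ∈ Finset.Icc 1 m, x istar u :=
    fun m => hB (Set.mem_range_self m)
  set D : ℝ := max 1 (μ i + ε - B) with hDdef
  have hD1 : (1:ℝ) ≤ D := le_max_left _ _
  have hlogT : Tendsto (fun t : ℕ => Real.log t) atTop atTop :=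
    Real.tendsto_log_atTop.comp tendsto_natCast_atTop_atTop
  have hev : ∀ᶠ t : ℕ in atTop,
      max 1 ((2*D)^2 * (M:ℝ) / C) ≤ Real.log t ∧ K + 1 ≤ t := by
    filter_upwards [hlogT.eventually_ge_atTop (max 1 ((2*D)^2 * (M:ℝ) / C)),
      eventually_ge_atTop (K+1)] with t h1 h2
    exact ⟨h1, h2⟩
  obtain ⟨t0, ht0⟩ := eventually_atTop.mp hev
  have hKt0 : K + 1 ≤ t0 := (ht0 t0 le_rfl).2
  -- key per-pull bound
  have key : ∀ n : ℕ, t0 ≤ n + 1 → I (n+1) = i →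
      (pullCount I i n : ℝ) ≤ max (4*(M:ℝ)) (4*C*Real.log ((n:ℝ)+1)/Δ^2) := by
    intro n hn hIn
    obtain ⟨hlogt, hKt⟩ := ht0 (n+1) hn
    have hcast : ((n+1 : ℕ) : ℝ) = (n:ℝ) + 1 := by push_cast; ring
    rw [hcast] at hlogt
    have hKn : K ≤ n := by omega
    have hTi1 : 1 ≤ pullCount I i n := pullCount_pos x I C hUCB hKn i
    have hTs1 : 1 ≤ pullCount I istar n := pullCount_pos x I C hUCB hKn istar
    have hrule := hUCB (n+1) (by omega)
    rw [if_neg] at hrule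
    swap
    · push_neg
      intro j
      have := pullCount_pos x I C hUCB (show K ≤ (n+1) - 1 by omega) j
      omega
    have hidx := hrule istar
    simp only [Nat.add_sub_cancel, hIn, hcast] at hidx
    have hL1 : (1:ℝ) ≤ Real.log ((n:ℝ)+1) := le_trans (le_max_left _ _) hlogt
    have hLD : (2*D)^2 ≤ C * Real.log ((n:ℝ)+1) / (M:ℝ) := by
      have h2 : (2*D)^2 * (M:ℝ) / C ≤ Real.log ((n:ℝ)+1) :=
        le_trans (le_max_right _ _) hlogt
      rw [div_le_iff₀ hC] at h2
      rw [le_div_iff₀ hMR]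
      calc (2*D)^2 * (M:ℝ) ≤ Real.log ((n:ℝ)+1) * C := h2
        _ = C * Real.log ((n:ℝ)+1) := mul_comm _ _
    have hempi : empMean x I i n
        = (1 / (pullCount I i n : ℝ)) * ∑ u ∈ Finset.Icc 1 (pullCount I i n), x i u := by
      rw [empMean, if_neg (by omega)]
    have hemps : empMean x I istar n
        = (1 / (pullCount I istar n : ℝ))
            * ∑ u ∈ Finset.Icc 1 (pullCount I istar n), x istar u := by
      rw [empMean, if_neg (by omega)]
    refine ucb_key_bound C (Real.log ((n:ℝ)+1)) Δ ε B D (M:ℝ)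
      (pullCount I i n : ℝ) (pullCount I istar n : ℝ)
      (μ i) (μ istar) (empMean x I i n) (empMean x I istar n)
      hC hL1 hΔpos hεdef (by exact_mod_cast hMpos)
      (by exact_mod_cast hTi1) (by exact_mod_cast hTs1) hidx ?_ ?_ ?_
      (le_max_right _ _) hD1 hLD hΔdef
    · intro hMT
      have hMT' : M ≤ pullCount I i n := by exact_mod_cast hMT
      have := hM1' (pullCount I i n) hMT'
      rw [abs_lt] at this
      rw [hempi]
      linarith [this.2]
    · intro hMT
      have hMT' : M ≤ pullCount I istar n := by exact_mod_cast hMT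
      have := hM2' (pullCount I istar n) hMT'
      rw [abs_lt] at this
      rw [hemps]
      linarith [this.1]
    · rw [hemps]; exact hB' _
  -- global bound by induction
  have glob : ∀ n : ℕ, t0 ≤ n → (pullCount I i n : ℝ) ≤
      (pullCount I i t0 : ℝ) + 1 + max (4*(M:ℝ)) (4*C*Real.log (n:ℝ)/Δ^2) := by
    intro n hn
    induction n, hn using Nat.le_induction with
    | base =>
      have h0 : (0:ℝ) ≤ max (4*(M:ℝ)) (4*C*Real.log (t0:ℝ)/Δ^2) :=
        le_max_of_le_left (by positivity)
      linarith
    | succ n hn ih =>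
      have hnpos : (1:ℝ) ≤ (n:ℝ) := by
        have h1 : 1 ≤ n := by omega
        exact_mod_cast h1
      have hlogmono : Real.log (n:ℝ) ≤ Real.log ((n:ℝ)+1) :=
        Real.log_le_log (by linarith) (by linarith)
      have hmax : max (4*(M:ℝ)) (4*C*Real.log (n:ℝ)/Δ^2)
          ≤ max (4*(M:ℝ)) (4*C*Real.log ((n:ℝ)+1)/Δ^2) := by
        apply max_le_max le_rfl
        gcongr
      have hcast : ((n+1 : ℕ) : ℝ) = (n:ℝ) + 1 := by push_cast; ring
      rw [pullCount_succ]
      by_cases hIn : I (n+1) = i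
      · rw [if_pos hIn]
        have hk := key n (by omega) hIn
        have h0 : (0:ℝ) ≤ (pullCount I i t0 : ℝ) := by positivity
        push_cast [hcast]
        linarith
      · rw [if_neg hIn, Nat.add_zero, hcast]
        exact le_trans ih (by linarith)
  -- squeeze
  have hub : ∀ᶠ n : ℕ in atTop, (pullCount I i n : ℝ) / (n:ℝ) ≤
      ((pullCount I i t0 : ℝ) + 1 + 4*(M:ℝ)) / (n:ℝ)
        + (4*C/Δ^2) * (Real.log (n:ℝ) / (n:ℝ)) := by
    filter_upwards [eventually_ge_atTop (max t0 1)] with n hn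
    have h1 := glob n (le_trans (le_max_left _ _) hn)
    have hn1 : 1 ≤ n := le_trans (le_max_right _ _) hn
    have hnR : (0:ℝ) < (n:ℝ) := by exact_mod_cast hn1
    have hlogn : 0 ≤ Real.log (n:ℝ) := Real.log_nonneg (by exact_mod_cast hn1)
    have hE : (0:ℝ) ≤ 4*C*Real.log (n:ℝ)/Δ^2 := by positivity
    have hM4 : (0:ℝ) ≤ 4*(M:ℝ) := by positivity
    have hmaxle : max (4*(M:ℝ)) (4*C*Real.log (n:ℝ)/Δ^2)
        ≤ 4*(M:ℝ) + 4*C*Real.log (n:ℝ)/Δ^2 :=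
      max_le (by linarith) (by linarith)
    have h2 : (pullCount I i n : ℝ) ≤
        (pullCount I i t0 : ℝ) + 1 + 4*(M:ℝ) + 4*C*Real.log (n:ℝ)/Δ^2 := by linarith
    calc (pullCount I i n : ℝ) / (n:ℝ)
        ≤ ((pullCount I i t0 : ℝ) + 1 + 4*(M:ℝ) + 4*C*Real.log (n:ℝ)/Δ^2) / (n:ℝ) := by
          gcongr
      _ = ((pullCount I i t0 : ℝ) + 1 + 4*(M:ℝ)) / (n:ℝ)
            + (4*C/Δ^2) * (Real.log (n:ℝ) / (n:ℝ)) := by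
          field_simp
  have hlim1 : Tendsto (fun n : ℕ => ((pullCount I i t0 : ℝ) + 1 + 4*(M:ℝ)) / (n:ℝ))
      atTop (nhds 0) := tendsto_const_div_atTop_nhds_zero_nat _
  have hlim2 : Tendsto (fun n : ℕ => Real.log (n:ℝ) / (n:ℝ)) atTop (nhds 0) :=
    Real.isLittleO_log_id_atTop.tendsto_div_nhds_zero.comp tendsto_natCast_atTop_atTop
  have hlim : Tendsto (fun n : ℕ => ((pullCount I i t0 : ℝ) + 1 + 4*(M:ℝ)) / (n:ℝ)
      + (4*C/Δ^2) * (Real.log (n:ℝ) / (n:ℝ))) atTop (nhds 0) := by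
    simpa using hlim1.add (hlim2.const_mul (4*C/Δ^2))
  refine squeeze_zero' ?_ hub hlim
  filter_upwards with n
  positivity
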